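/- If (x, y) satisfies -√5·y² = x(x-1)(x-κ)(x-2κ+1)(x-2κ) with κ = 81+36√5, and b₂x² + b₁x ≠ 0 and x²(x-2κ)² ≠ 0, then the point (X, Y) = (g(x), h₁(x)·y) satisfies Y² = X³ - X, where g, h₁ and all coefficients are as in the explicit degree-5 cover formulas (a₄ = -45(9+4√5), a₃ = 660(161+72√5), a₂ = -3240(2889+1292√5), a₁ = 1980(51841+23184√5), a₀ = -324(930249+416020√5), b₂ = -100√5(2889+1292√5), b₁ = 1800√5(51841+23184√5), c₅ = -54(9+4√5), c₄ = 1030(161+72√5), c₃ = -7920(2889+1292√5), c₂ = 18780(51841+23184√5), c₁ = 216(930249+416020√5), c₀ = -1944(16692641+7465176√5), d = 1000√5(219602+98209√5)). -/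

import Mathlib

noncomputable section

def sq5 : ℝ := Real.sqrt 5
def kap : ℝ := 81 + 36 * sq5

def a4 : ℝ := -45 * (9 + 4 * sq5)
def a3 : ℝ := 660 * (161 + 72 * sq5)
def a2 : ℝ := -3240 * (2889 + 1292 * sq5)
def a1 : ℝ := 1980 * (51841 + 23184 * sq5)
def a0 : ℝ := -324 * (930249 + 416020 * sq5)
def b2 : ℝ := -100 * sq5 * (2889 + 1292 * sq5)
def b1 : ℝ := 1800 * sq5 * (51841 + 23184 * sq5)
def c5 : ℝ := -54 * (9 + 4 * sq5)
def c4 : ℝ := 1030 * (161 + 72 * sq5)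
def c3 : ℝ := -7920 * (2889 + 1292 * sq5)
def c2 : ℝ := 18780 * (51841 + 23184 * sq5)
def c1 : ℝ := 216 * (930249 + 416020 * sq5)
def c0 : ℝ := -1944 * (16692641 + 7465176 * sq5)
def d : ℝ := 1000 * sq5 * (219602 + 98209 * sq5)

/-- The x-coordinate of the degree-5 cover. -/
def g (x : ℝ) : ℝ :=
  (x^5 + a4*x^4 + a3*x^3 + a2*x^2 + a1*x + a0) / (b2*x^2 + b1*x)

/-- The factor h₁ of the y-coordinate h(x,y) = h₁(x)·y of the degree-5 cover. -/
def h1 (x : ℝ) : ℝ :=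
  (x^6 + c5*x^5 + c4*x^4 + c3*x^3 + c2*x^2 + c1*x + c0) / (d * x^2 * (x - 2*kap)^2)

set_option maxRecDepth 100000
set_option maxHeartbeats 4000000

/-- Points (x,y) of the genus-2 curve -√5 y² = x(x-1)(x-κ)(x-2κ+1)(x-2κ) are sent by
(x,y) ↦ (g(x), h₁(x)·y) to points of the elliptic curve Y² = X³ - X. -/
theorem cover_maps_curve_to_elliptic (x y : ℝ)
    (hC : -sq5 * y^2 = x * (x - 1) * (x - kap) * (x - (2*kap - 1)) * (x - 2*kap))
    (hden1 : b2*x^2 + b1*x ≠ 0) (hden2 : x^2 * (x - 2*kap)^2 ≠ 0) :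
    (h1 x * y)^2 = (g x)^3 - g x := by
  have hs : sq5 ^ 2 = 5 := Real.sq_sqrt (by norm_num)
  have hs0 : sq5 ≠ 0 := by
    have : (0:ℝ) < sq5 := Real.sqrt_pos.mpr (by norm_num)
    linarith
  have hd : d ≠ 0 := by
    have h5 : (0:ℝ) < sq5 := Real.sqrt_pos.mpr (by norm_num)
    have : (0:ℝ) < d := by rw [d]; positivity
    linarith
  have hE : d * x^2 * (x - 2*kap)^2 ≠ 0 := by
    rw [mul_assoc]; exact mul_ne_zero hd hden2
  rw [g, h1]
  simp only [kap, a4, a3, a2, a1, a0, b2, b1, c5, c4, c3, c2, c1, c0, d] at hC hden1 hden2 hE ⊢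
  have hD : -(100 * sq5 * (2889 + 1292 * sq5) * x ^ 2) + 1800 * sq5 * (51841 + 23184 * sq5) * x ≠ 0 := by
    intro h; exact hden1 (by linear_combination h)
  field_simp [hD, hE]
  rw [div_eq_div_iff (mul_ne_zero (mul_ne_zero (pow_ne_zero _ (by rintro rfl; exact hden2 (by ring))) (pow_ne_zero _ (ne_of_gt (by have : (0:ℝ) ≤ sq5 := Real.sqrt_nonneg 5; linarith)))) (pow_ne_zero _ (by intro h; exact hden2 (by linear_combination x ^ 2 * (x - 2 * (81 + 36 * sq5)) * h)))) (mul_ne_zero (pow_ne_zero _ (by rintro rfl; exact hden1 (by ring))) (pow_ne_zero _ (by intro h; exact hden1 (by linear_combination sq5 * x * h))))]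
  apply mul_left_cancel₀ hs0
  linear_combination (-sq5 * (x * (x * (x * (x * (x * (x + -(54 * (9 + 4 * sq5))) + 1030 * (161 + sq5 * 72)) + -(7920 * (2889 + sq5 * 1292))) + 18780 * (51841 + sq5 * 23184)) + 216 * (930249 + sq5 * 416020)) + -(1944 * (16692641 + sq5 * 7465176)))^2 * (x ^ 3 * (-(x * (2889 + sq5 * 1292) * 100) + (51841 + sq5 * 23184) * 1800) ^ 3)) * hC + ((179638851791286593288814685428008280380924928000000)*sq5^1*x^4 + (-187979630764345216747628084311382718694087680000000)*sq5^1*x^5 + (-89450160439788576309051655598570421231926784000000)*sq5^1*x^6 + (43684961102707123581638280684763138772391936000000)*sq5^1*x^7 + (-4200695456819764106332487848064213977742016000000)*sq5^1*x^8 + (-29491471877859687064593734984083356477504000000)*sq5^1*x^9 + (11076488442346576759858351235085953160384000000)*sq5^1*x^10 + (-455058453522747745215093152366735944320000000)*sq5^1*x^11 + (9905604129513878683108340940142019184000000)*sq5^1*x^12 + (-137836804765953361533827245195756176000000)*sq5^1*x^13 + (1314991117779084086681588015895984000000)*sq5^1*x^14 + (-8870661270902641623708910535568000000)*sq5^1*x^15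 + (42591690710168504341859427852000000)*sq5^1*x^16 + (-141857581893292770908815116000000)*sq5^1*x^17 + (292057677591371864538660000000)*sq5^1*x^18 + (-158007751161732267408000000)*sq5^1*x^19 + (-1134760522447339011000000)*sq5^1*x^20 + (4098316479382377000000)*sq5^1*x^21 + (-6655099353129000000)*sq5^1*x^22 + (4822503407000000)*sq5^1*x^23 + (561363663330228836350142677287674018580344832000000)*sq5^2*x^4 + (-585449177420262384309393706280007815461822464000000)*sq5^2*x^5 + (-359063682677319504050200848754912355922917376000000)*sq5^2*x^6 + (164292559228603215920849039227630902581305344000000)*sq5^2*x^7 + (-15905155063228506587503365201636417577610496000000)*sq5^2*x^8 + (-22723192384862416458046802400525260484096000000)*sq5^2*x^9 + (32045763534634491924674585400878181802752000000)*sq5^2*x^10 + (-1290061598696052601007033572902282178560000000)*sq5^2*x^11 + (26954221969401462647043180012046868544000000)*sq5^2*x^12 + (-358151038020595342068303805322451840000000)*sq5^2*x^13 + (3252192441689045014465876252894656000000)*sq5^2*x^14 + (-20790988660758785790942380143872000000)*sq5^2*x^15 + (93864727446984751180055975568000000)*sq5^2*x^16 + (-289644011766768711621028320000000)*sq5^2*x^17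 + (535775363956976894772048000000)*sq5^2*x^18 + (-205881171522883742592000000)*sq5^2*x^19 + (-1809752885968330116000000)*sq5^2*x^20 + (5118949553052168000000)*sq5^2*x^21 + (-5927622995268000000)*sq5^2*x^22 + (2156689088000000)*sq5^2*x^23 + (751814973548690308069454648712661607300284416000000)*sq5^3*x^4 + (-781418848374721222310414791694938652180103168000000)*sq5^3*x^5 + (-639206949968507055588920954228327650213220352000000)*sq5^3*x^6 + (275619961760768546807147912220027953772748800000000)*sq5^3*x^7 + (-26888835819217916691951869473754103741026304000000)*sq5^3*x^8 + (105546217243237293250781020964112931067904000000)*sq5^3*x^9 + (39031962822515861001831711531793795423488000000)*sq5^3*x^10 + (-1554697179440483887710165422222103905280000000)*sq5^3*x^11 + (31119993661444422713131301094624663744000000)*sq5^3*x^12 + (-392883728133797696226046065069655872000000)*sq5^3*x^13 + (3370807837361406261542533683516864000000)*sq5^3*x^14 + (-20215149771474519025379368318272000000)*sq5^3*x^15 + (84618395485608481123927504176000000)*sq5^3*x^16 + (-237119230229748384836595888000000)*sq5^3*x^17 + (380884282669213310779776000000)*sq5^3*x^18 + (-72591915199075982784000000)*sq5^3*x^19 +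 (-1078707548261608848000000)*sq5^3*x^20 + (2119596838149456000000)*sq5^3*x^21 + (-1319893721856000000)*sq5^3*x^22 + (559376954973848328717624288983907749716230144000000)*sq5^4*x^4 + (-579427453650503041952806376740573488301473792000000)*sq5^4*x^5 + (-662753703267630861857377503646119226484539392000000)*sq5^4*x^6 + (270986358894239815655018892943280114025234432000000)*sq5^4*x^7 + (-26641099317166661380491789968657973846491136000000)*sq5^4*x^8 + (234901206813212788173440654858652499304448000000)*sq5^4*x^9 + (25595762504996885414461337138621316203520000000)*sq5^4*x^10 + (-1029678626125626287734558498473350406144000000)*sq5^4*x^11 + (19722893834021228094072003536180295936000000)*sq5^4*x^12 + (-235160972803520084255350506829429248000000)*sq5^4*x^13 + (1888337321765398958499002636289792000000)*sq5^4*x^14 + (-10478178052056795969548554450944000000)*sq5^4*x^15 + (39855342307944151325782234944000000)*sq5^4*x^16 + (-98310094482601408807242368000000)*sq5^4*x^17 + (129095631345048208233984000000)*sq5^4*x^18 + (8155596272629602816000000)*sq5^4*x^19 + (-284957811921633984000000)*sq5^4*x^20 + (290687182036992000000)*sq5^4*x^21 + (249717426533267441836317327621082888645902336000000)*sq5^5*x^4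 + (-257785486160614355580517271528623064968593408000000)*sq5^5*x^5 + (-441329400522100865426393710544263765160361984000000)*sq5^5*x^6 + (172262589508874344042800867876124571998027776000000)*sq5^5*x^7 + (-17046697140291510819517402541734454332735488000000)*sq5^5*x^8 + (221922413653930846867825922516216055054336000000)*sq5^5*x^9 + (9429720102062931043586944892653094486016000000)*sq5^5*x^10 + (-402668259002271333196712953725542141952000000)*sq5^5*x^11 + (7389456801495154107409560653353939968000000)*sq5^5*x^12 + (-82608616235110323942277784123249664000000)*sq5^5*x^13 + (613055744741347715677830962411520000000)*sq5^5*x^14 + (-3086785506966480445132683706368000000)*sq5^5*x^15 + (10346528999143180531528494336000000)*sq5^5*x^16 + (-21304682923661296552089344000000)*sq5^5*x^17 + (20115466456555554711552000000)*sq5^5*x^18 + (8792999330874974208000000)*sq5^5*x^19 + (-28174296105123840000000)*sq5^5*x^20 + (66887322425788106407924172180369990784909312000000)*sq5^6*x^4 + (-68811656220305942752877359776874669038108672000000)*sq5^6*x^5 + (-195854162819260974389069293775605874697437184000000)*sq5^6*x^6 + (73503583029392603420587043778621732714184704000000)*sq5^6*x^7 + (-7303398423113916538847046263735628723191808000000)*sq5^6*x^8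 + (119094144531440822463045673952589240336384000000)*sq5^6*x^9 + (1725461280734787394646953769943934500864000000)*sq5^6*x^10 + (-91839186405328375246376964231726170112000000)*sq5^6*x^11 + (1629103993230458001946607322409562112000000)*sq5^6*x^12 + (-16932350073664557709365079420452864000000)*sq5^6*x^13 + (114111326682114760081370710204416000000)*sq5^6*x^14 + (-506277572147685870515187720192000000)*sq5^6*x^15 + (1421041691050665581013175296000000)*sq5^6*x^16 + (-2200736889605210581794816000000)*sq5^6*x^17 + (995591558923226652672000000)*sq5^6*x^18 + (1217129591741349888000000)*sq5^6*x^19 + (9953267942356480078920942010662260318404608000000)*sq5^7*x^4 + (-10204363177791298212519454603408859486748672000000)*sq5^7*x^5 + (-57960484471030909537701869912349906784223232000000)*sq5^7*x^6 + (21074382944503668335837871976786976820953088000000)*sq5^7*x^7 + (-2094255298509461309862030918541160051638272000000)*sq5^7*x^8 + (38691723042397377336630044155446863069184000000)*sq5^7*x^9 + (28217034936464307182932617366998482944000000)*sq5^7*x^10 + (-10850316018459251837021831329557774336000000)*sq5^7*x^11 + (193763899622633481951942468325146624000000)*sq5^7*x^12 + (-1858290471593397878224332257427456000000)*sq5^7*x^13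 + (11083777044941935579278166622208000000)*sq5^7*x^14 + (-41280152150654107551986614272000000)*sq5^7*x^15 + (87987638902526092664045568000000)*sq5^7*x^16 + (-78064770272104422899712000000)*sq5^7*x^17 + (-18778570844009398272000000)*sq5^7*x^18 + (634760981775295684744615456739910746112000000000)*sq5^8*x^4 + (-648523647165452809585720286843737473024000000000)*sq5^8*x^5 + (-11036754374695059290530952624438153576448000000000)*sq5^8*x^6 + (3918697009451525715006743742031425699840000000000)*sq5^8*x^7 + (-387358945105610845834453999552622100480000000000)*sq5^8*x^8 + (7491134836177477887655211615439814656000000000)*sq5^8*x^9 + (-44858168053162523536146930322440192000000000)*sq5^8*x^10 + (-373708120363788643296118424469504000000000)*sq5^8*x^11 + (9221804780929701473830154895360000000000)*sq5^8*x^12 + (-82826097754381509668293509120000000000)*sq5^8*x^13 + (420389767066841030909509632000000000)*sq5^8*x^14 + (-1197223575959766043459584000000000)*sq5^8*x^15 + (1511645929242128842752000000000)*sq5^8*x^16 + (-1227840647339351084715392970517842493440000000000)*sq5^9*x^6 + (429137076853152153334842501104696033280000000000)*sq5^9*x^7 + (-41905136684981896422068395896133386240000000000)*sq5^9*x^8 +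 (785131097597859326776650045023846400000000000)*sq5^9*x^9 + (-6539376210821377945357609363046400000000000)*sq5^9*x^10 + (27659432661576785952155621130240000000000)*sq5^9*x^11 + (-57895251456835086862400225280000000000)*sq5^9*x^12 + (47593788468338070243901440000000000)*sq5^9*x^13 + (-60843407699593639783227768001737523200000000000)*sq5^10*x^6 + (21097607366105072807882704521737011200000000000)*sq5^10*x^7 + (-2018451985541228848532469558018048000000000000)*sq5^10*x^8 + (33348989734480402206626933637120000000000000)*sq5^10*x^9 + (-232182254860100714626253586432000000000000)*sq5^10*x^10 + (708709955036842391195300659200000000000)*sq5^10*x^11 + (-778807447663713876718387200000000000)*sq5^10*x^12) * hs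


end
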